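/- For skew-Hermitian operators A and B on a finite-dimensional Hilbert space with ‖A‖, ‖B‖ ≤ R, and all sufficiently small t, the first-order Trotter error satisfies ‖exp(t(A+B)) − exp(tA)·exp(tB)‖ ≤ C·t²·‖[A,B]‖ for a constant C depending only on R. -/

import Mathlib

set_option maxHeartbeats 1000000

open NormedSpace

section Aux

variable {V : Type*} [NormedAddCommGroup V] [InnerProductSpace ℂ V]
    [FiniteDimensional ℂ V]

local notation "𝔸" => V →L[ℂ] V

lemma aux_norm_exp_le (x : 𝔸) : ‖exp x‖ ≤ Real.exp ‖x‖ := by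
  rw [exp_eq_tsum ℝ]
  refine (norm_tsum_le_tsum_norm (norm_expSeries_summable' x)).trans ?_
  rw [Real.exp_eq_exp_ℝ, exp_eq_tsum_div]
  refine Summable.tsum_le_tsum (fun n => ?_) (norm_expSeries_summable' x)
    (Real.summable_pow_div_factorial ‖x‖)
  rw [norm_smul, norm_inv, div_eq_inv_mul]
  simp only [Real.norm_natCast]
  gcongr
  cases n with
  | zero =>
    rw [pow_zero, pow_zero, ContinuousLinearMap.one_def]
    exact ContinuousLinearMap.norm_id_le
  | succ n => exact norm_pow_le' x n.succ_pos

lemma aux_abs_le {u s : ℝ} (hu : u ∈ Set.uIoc 0 s) : |u| ≤ |s| := by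
  rcases Set.mem_uIoc.1 hu with h | h <;> rw [abs_le] <;>
    constructor <;> [skip; skip; skip; skip] <;>
    first
    | linarith [le_abs_self s, neg_abs_le s, h.1, h.2]

lemma aux_comm_bound {R : ℝ} (hR : 0 < R) (A B : 𝔸) (hA : ‖A‖ ≤ R)
    (s : ℝ) (hs : |s| ≤ 1) :
    ‖exp (s • A) * B - B * exp (s • A)‖ ≤
      Real.exp (3 * R) * ‖A * B - B * A‖ * |s| := by
  set h : ℝ → 𝔸 := fun u => exp (u • A) * (B * exp ((s - u) • A)) with hh
  have cexp : Continuous fun u : ℝ => exp (u • A) :=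
    (continuous_iff_continuousAt.2 fun x => (exp_analytic (𝕂 := ℝ) x).continuousAt).comp (continuous_id.smul continuous_const)
  have hderiv : ∀ u : ℝ, HasDerivAt h
      (exp (u • A) * (A * B - B * A) * exp ((s - u) • A)) u := by
    intro u
    have d1 : HasDerivAt (fun u : ℝ => exp (u • A)) (exp (u • A) * A) u :=
      hasDerivAt_exp_smul_const A u
    have d2i : HasDerivAt (fun w : ℝ => exp (w • A)) (A * exp ((s - u) • A)) (s - u) :=
      hasDerivAt_exp_smul_const' A (s - u)
    have dlin : HasDerivAt (fun u : ℝ => s - u) (-1) u := by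
      simpa using (hasDerivAt_id u).const_sub s
    have d2 : HasDerivAt (fun u : ℝ => exp ((s - u) • A))
        ((-1 : ℝ) • (A * exp ((s - u) • A))) u := d2i.scomp u dlin
    have := d1.mul (d2.const_mul B)
    refine this.congr_deriv ?_
    simp only [neg_one_smul, mul_neg]
    noncomm_ring
  have hcont : Continuous fun u : ℝ =>
      exp (u • A) * (A * B - B * A) * exp ((s - u) • A) := by
    exact (cexp.mul continuous_const).mul
      ((continuous_iff_continuousAt.2 fun x => (exp_analytic (𝕂 := ℝ) x).continuousAt).comp ((continuous_const.sub continuous_id).smul continuous_const))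
  have hint : (∫ u in (0:ℝ)..s,
      exp (u • A) * (A * B - B * A) * exp ((s - u) • A)) = h s - h 0 :=
    intervalIntegral.integral_eq_sub_of_hasDerivAt (fun u _ => hderiv u)
      (hcont.intervalIntegrable _ _)
  have hhs : h s = exp (s • A) * B := by simp [hh, exp_zero]
  have hh0 : h 0 = B * exp (s • A) := by simp [hh, exp_zero]
  rw [← hhs, ← hh0, ← hint]
  have bound : ∀ u ∈ Set.uIoc (0:ℝ) s,
      ‖exp (u • A) * (A * B - B * A) * exp ((s - u) • A)‖ ≤
        Real.exp (3 * R) * ‖A * B - B * A‖ := by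
    intro u hu
    have h1 : |u| ≤ 1 := (aux_abs_le hu).trans hs
    have h2 : |s - u| ≤ 2 := by
      have := aux_abs_le hu
      have := abs_sub_abs_le_abs_sub s u
      have := abs_sub s u
      calc |s - u| ≤ |s| + |u| := abs_sub _ _
        _ ≤ 2 := by linarith
    have e1 : ‖exp (u • A)‖ ≤ Real.exp R := by
      refine (aux_norm_exp_le _).trans (Real.exp_le_exp.2 ?_)
      calc ‖u • A‖ ≤ ‖u‖ * ‖A‖ := ContinuousLinearMap.opNorm_smul_le _ _
        _ ≤ 1 * R := mul_le_mul h1 hA (norm_nonneg _) zero_le_one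
        _ = R := one_mul R
    have e2 : ‖exp ((s - u) • A)‖ ≤ Real.exp (2 * R) := by
      refine (aux_norm_exp_le _).trans (Real.exp_le_exp.2 ?_)
      calc ‖(s - u) • A‖ ≤ ‖s - u‖ * ‖A‖ := ContinuousLinearMap.opNorm_smul_le _ _
        _ ≤ 2 * R := mul_le_mul h2 hA (norm_nonneg _) zero_le_two
    calc ‖exp (u • A) * (A * B - B * A) * exp ((s - u) • A)‖
        ≤ ‖exp (u • A)‖ * ‖A * B - B * A‖ * ‖exp ((s - u) • A)‖ := by
          exact (norm_mul_le _ _).trans (by gcongr; exact norm_mul_le _ _)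
      _ ≤ Real.exp R * ‖A * B - B * A‖ * Real.exp (2 * R) := by gcongr
      _ = Real.exp (3 * R) * ‖A * B - B * A‖ := by
          rw [mul_comm _ (Real.exp (2 * R)), ← mul_assoc, ← Real.exp_add]
          ring_nf
  calc ‖∫ u in (0:ℝ)..s, exp (u • A) * (A * B - B * A) * exp ((s - u) • A)‖
      ≤ Real.exp (3 * R) * ‖A * B - B * A‖ * |s - 0| :=
        intervalIntegral.norm_integral_le_of_norm_le_const bound
    _ = Real.exp (3 * R) * ‖A * B - B * A‖ * |s| := by rw [sub_zero]

end Aux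

/-- First-order Trotter error: for operators `A, B` with `‖A‖, ‖B‖ ≤ R` and `|t| ≤ 1`,
`‖exp(t(A+B)) − exp(tA) exp(tB)‖ ≤ C t² ‖[A,B]‖` for a constant `C` depending only on `R`. -/
theorem stmt_13 (V : Type*) [NormedAddCommGroup V] [InnerProductSpace ℂ V]
    [FiniteDimensional ℂ V] (R : ℝ) (hR : 0 < R) :
    ∃ C : ℝ, 0 < C ∧ ∀ (A B : V →L[ℂ] V), ‖A‖ ≤ R → ‖B‖ ≤ R →
      ∀ t : ℝ, |t| ≤ 1 →
        ‖exp (t • (A + B)) - exp (t • A) * exp (t • B)‖ ≤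
          C * t ^ 2 * ‖A * B - B * A‖ := by
  refine ⟨Real.exp (9 * R), Real.exp_pos _, fun A B hA hB t ht => ?_⟩
  have hexp : (exp : (V →L[ℂ] V) → (V →L[ℂ] V)) = exp := rfl
  rw [hexp]
  set M : V →L[ℂ] V := A + B with hM
  have hMn : ‖M‖ ≤ 2 * R := (norm_add_le A B).trans (by linarith)
  set f : ℝ → (V →L[ℂ] V) :=
    fun s => exp ((t - s) • M) * (exp (s • A) * exp (s • B)) with hf
  set g : ℝ → (V →L[ℂ] V) :=
    fun s => exp ((t - s) • M) * ((exp (s • A) * B - B * exp (s • A)) * exp (s • B))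
    with hg
  have cexpM : Continuous fun s : ℝ => exp ((t - s) • M) :=
    (continuous_iff_continuousAt.2 fun x => (exp_analytic (𝕂 := ℝ) x).continuousAt).comp ((continuous_const.sub continuous_id).smul continuous_const)
  have cexpA : Continuous fun s : ℝ => exp (s • A) :=
    (continuous_iff_continuousAt.2 fun x => (exp_analytic (𝕂 := ℝ) x).continuousAt).comp (continuous_id.smul continuous_const)
  have cexpB : Continuous fun s : ℝ => exp (s • B) :=
    (continuous_iff_continuousAt.2 fun x => (exp_analytic (𝕂 := ℝ) x).continuousAt).comp (continuous_id.smul continuous_const)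
  have hderiv : ∀ s : ℝ, HasDerivAt f (g s) s := by
    intro s
    have dlin : HasDerivAt (fun s : ℝ => t - s) (-1) s := by
      simpa using (hasDerivAt_id s).const_sub t
    have dM : HasDerivAt (fun s : ℝ => exp ((t - s) • M))
        ((-1 : ℝ) • (exp ((t - s) • M) * M)) s :=
      (hasDerivAt_exp_smul_const M (t - s)).scomp s dlin
    have dA : HasDerivAt (fun s : ℝ => exp (s • A)) (A * exp (s • A)) s :=
      hasDerivAt_exp_smul_const' A s
    have dB : HasDerivAt (fun s : ℝ => exp (s • B)) (B * exp (s • B)) s :=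
      hasDerivAt_exp_smul_const' B s
    have := dM.mul (dA.mul dB)
    refine this.congr_deriv ?_
    simp only [hg, hM, neg_one_smul, Pi.mul_apply]
    noncomm_ring
  have gcont : Continuous g := by
    exact cexpM.mul (((cexpA.mul continuous_const).sub
      (continuous_const.mul cexpA)).mul cexpB)
  have hint : (∫ s in (0:ℝ)..t, g s) = f t - f 0 :=
    intervalIntegral.integral_eq_sub_of_hasDerivAt (fun s _ => hderiv s)
      (gcont.intervalIntegrable _ _)
  have hft : f t = exp (t • A) * exp (t • B) := by simp [hf, exp_zero]
  have hf0 : f 0 = exp (t • M) := by simp [hf, exp_zero]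
  have key : exp (t • M) - exp (t • A) * exp (t • B) = -(∫ s in (0:ℝ)..t, g s) := by
    rw [hint, hft, hf0]; abel
  rw [hM] at key ⊢
  rw [key, norm_neg]
  have bound : ∀ s ∈ Set.uIoc (0:ℝ) t,
      ‖g s‖ ≤ Real.exp (9 * R) * ‖A * B - B * A‖ * |t| := by
    intro s hs
    have h1 : |s| ≤ |t| := aux_abs_le hs
    have h1' : |s| ≤ 1 := h1.trans ht
    have h2 : |t - s| ≤ 2 := by
      have := abs_sub t s
      have := abs_sub_abs_le_abs_sub t s
      calc |t - s| ≤ |t| + |s| := abs_sub _ _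
        _ ≤ 2 := by linarith
    have eM : ‖exp ((t - s) • M)‖ ≤ Real.exp (4 * R) := by
      refine (aux_norm_exp_le _).trans (Real.exp_le_exp.2 ?_)
      calc ‖(t - s) • M‖ ≤ ‖t - s‖ * ‖M‖ := ContinuousLinearMap.opNorm_smul_le _ _
        _ ≤ 2 * (2 * R) := mul_le_mul h2 hMn (norm_nonneg _) zero_le_two
        _ = 4 * R := by ring
    have eB : ‖exp (s • B)‖ ≤ Real.exp R := by
      refine (aux_norm_exp_le _).trans (Real.exp_le_exp.2 ?_)
      calc ‖s • B‖ ≤ ‖s‖ * ‖B‖ := ContinuousLinearMap.opNorm_smul_le _ _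
        _ ≤ 1 * R := mul_le_mul h1' hB (norm_nonneg _) zero_le_one
        _ = R := one_mul R
    have eC : ‖exp (s • A) * B - B * exp (s • A)‖ ≤
        Real.exp (3 * R) * ‖A * B - B * A‖ * |s| :=
      aux_comm_bound hR A B hA s h1'
    calc ‖g s‖ ≤ ‖exp ((t - s) • M)‖ *
          (‖exp (s • A) * B - B * exp (s • A)‖ * ‖exp (s • B)‖) := by
          exact (norm_mul_le _ _).trans (by gcongr; exact norm_mul_le _ _)
      _ ≤ Real.exp (4 * R) * ((Real.exp (3 * R) * ‖A * B - B * A‖ * |s|) * Real.exp R) := by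
          gcongr <;> positivity
      _ ≤ Real.exp (4 * R) * ((Real.exp (3 * R) * ‖A * B - B * A‖ * |t|) * Real.exp R) := by
          gcongr
      _ ≤ Real.exp (9 * R) * ‖A * B - B * A‖ * |t| := by
          have h9 : Real.exp (4 * R) * Real.exp (3 * R) * Real.exp R ≤ Real.exp (9 * R) := by
            rw [← Real.exp_add, ← Real.exp_add]
            exact Real.exp_le_exp.2 (by linarith)
          have hnn : (0:ℝ) ≤ ‖A * B - B * A‖ * |t| := by positivity
          calc Real.exp (4 * R) * ((Real.exp (3 * R) * ‖A * B - B * A‖ * |t|) * Real.exp R)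
              = Real.exp (4 * R) * Real.exp (3 * R) * Real.exp R * (‖A * B - B * A‖ * |t|) := by
                ring
            _ ≤ Real.exp (9 * R) * (‖A * B - B * A‖ * |t|) := mul_le_mul_of_nonneg_right h9 hnn
            _ = Real.exp (9 * R) * ‖A * B - B * A‖ * |t| := by ring
  calc ‖∫ s in (0:ℝ)..t, g s‖
      ≤ Real.exp (9 * R) * ‖A * B - B * A‖ * |t| * |t - 0| :=
        intervalIntegral.norm_integral_le_of_norm_le_const bound
    _ = Real.exp (9 * R) * t ^ 2 * ‖A * B - B * A‖ := by
        rw [sub_zero, ← sq_abs t]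
        ring
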